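/- With $S$ distributed according to the stationary CDF $F_S$ above and $\Delta \sim$ Laplace($\lambda$) independent of $S$, the stationary loss-of-load probability satisfies $\mathbb{P}\{\Delta < -G^{\max} - \alpha_d S\} = \int_{-\infty}^{-G^{\max}} \frac{\lambda}{2} e^{\lambda\delta} F_S\big(-\frac{\delta + G^{\max}}{\alpha_d}\big)\,d\delta = \frac{1}{2} e^{-\lambda G^{\max}} \cdot \frac{1-\alpha}{1 - \alpha e^{-(1/\alpha_c - \alpha_d)\lambda S^{\max}/2}}$. -/

import Mathlib

open MeasureTheory ProbabilityTheory Real Set Filter Topology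

/-- Stationary CDF of the stored power under the greedy policy. -/
noncomputable def statCDF (l αc αd Smax : ℝ) (s : ℝ) : ℝ :=
  if s < 0 then 0
  else if s < Smax then
    (1 - (1 + αc * αd) / 2 * exp (-((1 / αc - αd) * l * s / 2))) /
      (1 - αc * αd * exp (-((1 / αc - αd) * l * Smax / 2)))
  else 1

/-- CDF of a Laplace(λ) random variable. -/
noncomputable def laplaceCDF (l x : ℝ) : ℝ :=
  if x < 0 then exp (l * x) / 2 else 1 - exp (-(l * x)) / 2

lemma aux_intOn {c : ℝ} (hc : 0 < c) (a : ℝ) :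
    IntegrableOn (fun x => Real.exp (c * x)) (Set.Iic a) := by
  rw [← (Measure.measurePreserving_neg (volume : Measure ℝ)).integrableOn_comp_preimage
      (Homeomorph.neg ℝ).measurableEmbedding]
  simp only [Function.comp_def, neg_preimage, neg_Iic]
  rw [integrableOn_Ici_iff_integrableOn_Ioi]
  simpa [neg_mul, mul_neg, mul_comm] using exp_neg_integrableOn_Ioi (-a) hc

lemma aux_int {c : ℝ} (hc : 0 < c) (a : ℝ) :
    ∫ x in Set.Iic a, Real.exp (c * x) = Real.exp (c * a) / c := by
  have h : ∀ x ∈ Set.Iic a, HasDerivAt (fun y => Real.exp (c * y) / c) (Real.exp (c * x)) x := by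
    intro x _
    have h1 : HasDerivAt (fun y : ℝ => Real.exp (c * y)) (Real.exp (c * x) * c) x := by
      simpa [mul_comm] using (((hasDerivAt_id x).const_mul c).exp)
    have := h1.div_const c
    simpa [mul_div_assoc, mul_div_cancel_right₀ _ hc.ne'] using this
  have htend : Tendsto (fun x => Real.exp (c * x) / c) atBot (𝓝 0) := by
    have h1 : Tendsto (fun x : ℝ => c * x) atBot atBot := by
      simpa [mul_comm] using tendsto_id.atBot_mul_const hc (f := fun x : ℝ => x)
    have := Real.tendsto_exp_atBot.comp h1
    simpa using this.div_const c
  rw [integral_Iic_of_hasDerivAt_of_tendsto' h (aux_intOn hc a) htend, sub_zero]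

set_option maxHeartbeats 2000000 in
/-- Stationary loss-of-load probability: with `S` stationary and `Δ ~ Laplace(λ)`
independent of `S`,
`P{Δ < -Gᵐᵃˣ - αd S} = ∫_{-∞}^{-Gᵐᵃˣ} (λ/2)e^{λδ} F_S(-(δ+Gᵐᵃˣ)/αd) dδ
  = ½ e^{-λGᵐᵃˣ} (1-α)/(1 - α e^{-(1/αc - αd)λSᵐᵃˣ/2})`. -/
theorem stmt9 {Ω : Type*} [MeasureSpace Ω] [IsProbabilityMeasure (ℙ : Measure Ω)]
    (S Δ : Ω → ℝ) (l αc αd Smax Gmax : ℝ) (hl : 0 < l)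
    (hαc : αc ∈ Set.Ioo (0 : ℝ) 1) (hαd : αd ∈ Set.Ioo (0 : ℝ) 1)
    (hSmax : 0 < Smax) (hGmax : 0 < Gmax)
    (hmS : Measurable S) (hmΔ : Measurable Δ)
    (hindep : IndepFun S Δ ℙ)
    (hlawS : ∀ s, (ℙ {ω | S ω ≤ s}).toReal = statCDF l αc αd Smax s)
    (hlawΔ : ∀ x, (ℙ {ω | Δ ω ≤ x}).toReal = laplaceCDF l x) :
    (ℙ {ω | Δ ω < -Gmax - αd * S ω}).toReal =
      (∫ δ in Set.Iic (-Gmax),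
        (l / 2) * exp (l * δ) * statCDF l αc αd Smax (-((δ + Gmax) / αd))) ∧
    (ℙ {ω | Δ ω < -Gmax - αd * S ω}).toReal =
      (1 / 2) * exp (-(l * Gmax)) *
        ((1 - αc * αd) / (1 - αc * αd * exp (-((1 / αc - αd) * l * Smax / 2)))) := by
  obtain ⟨hαc0, hαc1⟩ := hαc
  obtain ⟨hαd0, hαd1⟩ := hαd
  have hα0 : 0 < αc * αd := mul_pos hαc0 hαd0
  have hα1 : αc * αd < 1 := by nlinarith
  have hk0 : 0 < (1 / αc - αd) * l / 2 := by
    have h1 : 1 < 1 / αc := by rw [lt_div_iff₀ hαc0]; linarith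
    have : 0 < 1 / αc - αd := by linarith
    positivity
  set k : ℝ := (1 / αc - αd) * l / 2 with hk_def
  set E : ℝ := exp (-(k * Smax)) with hE_def
  have hE0 : 0 < E := exp_pos _
  have hE1 : E < 1 := by
    rw [hE_def, exp_lt_one_iff]
    nlinarith
  have hD0 : 0 < 1 - αc * αd * E := by nlinarith
  set m : ℝ := k / αd with hm_def
  have hm0 : 0 < m := div_pos hk0 hαd0
  have hmval : m = l * (1 - αc * αd) / (2 * (αc * αd)) := by
    rw [hm_def, hk_def]; field_simp
  have hEexp : exp (-((1 / αc - αd) * l * Smax / 2)) = E := by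
    rw [hE_def]; congr 1; ring
  -- laws
  set μS : Measure ℝ := Measure.map S (ℙ : Measure Ω) with hμS_def
  set μΔ : Measure ℝ := Measure.map Δ (ℙ : Measure Ω) with hμΔ_def
  haveI instS : IsProbabilityMeasure μS := Measure.isProbabilityMeasure_map hmS.aemeasurable
  haveI instΔ : IsProbabilityMeasure μΔ := Measure.isProbabilityMeasure_map hmΔ.aemeasurable
  have hSIicR : ∀ x, (μS (Set.Iic x)).toReal = statCDF l αc αd Smax x := by
    intro x
    rw [hμS_def, Measure.map_apply hmS measurableSet_Iic]
    exact hlawS x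
  have hSIic : ∀ x, μS (Set.Iic x) = ENNReal.ofReal (statCDF l αc αd Smax x) := by
    intro x
    rw [← hSIicR x, ENNReal.ofReal_toReal (measure_ne_top _ _)]
  have hΔIic : ∀ x, μΔ (Set.Iic x) = ENNReal.ofReal (laplaceCDF l x) := by
    intro x
    rw [hμΔ_def, ← ENNReal.ofReal_toReal (measure_ne_top (Measure.map Δ (ℙ : Measure Ω)) (Set.Iic x)),
      Measure.map_apply hmΔ measurableSet_Iic]
    exact congrArg ENNReal.ofReal (hlawΔ x)
  -- density of Δ
  set ρ : ℝ → ℝ := fun x => l / 2 * exp (-(l * |x|)) with hρ_def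
  have hρc : Continuous ρ := by
    exact continuous_const.mul (Real.continuous_exp.comp (continuous_const.mul continuous_abs).neg)
  have hρnn : ∀ x, 0 ≤ ρ x := fun x => by positivity
  have hρint : Integrable ρ := by
    rw [← integrableOn_univ, ← Set.Iic_union_Ioi (a := (0:ℝ)), integrableOn_union]
    constructor
    · apply (IntegrableOn.congr_fun ((aux_intOn hl 0).const_mul (l/2)) _ measurableSet_Iic)
      intro x hx
      simp only [hρ_def]
      rw [abs_of_nonpos hx]
      ring_nf
    · apply (IntegrableOn.congr_fun ((exp_neg_integrableOn_Ioi 0 hl).const_mul (l/2)) _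
        measurableSet_Ioi)
      intro x hx
      simp only [hρ_def]
      rw [abs_of_pos hx]
      ring_nf
  have hρIic0 : ∀ x : ℝ, x ≤ 0 → ∫ δ in Set.Iic x, ρ δ = exp (l * x) / 2 := by
    intro x hx
    have hcg : ∀ δ ∈ Set.Iic x, ρ δ = l / 2 * exp (l * δ) := by
      intro δ hδ
      have hδ0 : δ ≤ 0 := le_trans hδ hx
      simp only [hρ_def, abs_of_nonpos hδ0]
      ring_nf
    rw [setIntegral_congr_fun measurableSet_Iic hcg, integral_const_mul, aux_int hl x]
    field_simp
  have hρIic : ∀ x, ∫ δ in Set.Iic x, ρ δ = laplaceCDF l x := by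
    intro x
    rcases le_or_gt x 0 with hx | hx
    · rw [hρIic0 x hx]
      unfold laplaceCDF
      rcases lt_or_eq_of_le hx with hx' | hx'
      · rw [if_pos hx']
      · rw [hx']
        norm_num
    · have hsplit : Set.Iic x = Set.Iic (0:ℝ) ∪ Set.Ioc 0 x := (Set.Iic_union_Ioc_eq_Iic hx.le).symm
      have hint2 : IntegrableOn ρ (Set.Ioc (0:ℝ) x) := hρint.integrableOn
      rw [hsplit, setIntegral_union (Set.Iic_disjoint_Ioc le_rfl) measurableSet_Ioc
        hρint.integrableOn hint2, hρIic0 0 le_rfl]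
      have hcg : ∀ δ ∈ Set.Ioc (0:ℝ) x, ρ δ = l / 2 * exp (-l * δ) := by
        intro δ hδ
        simp only [hρ_def, abs_of_pos hδ.1]
        ring_nf
      rw [setIntegral_congr_fun measurableSet_Ioc hcg, ← intervalIntegral.integral_of_le hx.le]
      have hderiv : ∀ y ∈ Set.uIcc (0:ℝ) x, HasDerivAt (fun t => -exp (-l * t) / 2)
          (l / 2 * exp (-l * y)) y := by
        intro y _
        have h1 : HasDerivAt (fun t : ℝ => -l * t) (-l) y := by
          simpa using (hasDerivAt_id y).const_mul (-l)
        have := (h1.exp.neg).div_const 2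
        refine this.congr_deriv ?_
        ring
      rw [intervalIntegral.integral_eq_sub_of_hasDerivAt hderiv
        ((continuous_const.mul (Real.continuous_exp.comp
          (continuous_const.mul continuous_id))).intervalIntegrable 0 x)]
      unfold laplaceCDF
      rw [if_neg (by linarith)]
      simp only [mul_zero, exp_zero, neg_mul]
      ring_nf
  have hμΔ_eq : μΔ = volume.withDensity (fun x => ENNReal.ofReal (ρ x)) := by
    refine Measure.ext_of_Iic μΔ _ (fun x => ?_)
    rw [hΔIic x, withDensity_apply _ measurableSet_Iic,
      ← ofReal_integral_eq_lintegral_ofReal hρint.integrableOn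
        (ae_of_all _ fun δ => hρnn δ), hρIic x]
  -- slice function
  set c : ℝ → ℝ := fun δ => -((δ + Gmax) / αd) with hc_def
  have hcmeas : Measurable c := (((measurable_id.add_const Gmax).div_const αd).neg)
  have hslice : ∀ δ, {s : ℝ | δ < -Gmax - αd * s} = Set.Iio (c δ) := by
    intro δ
    ext s
    simp only [Set.mem_setOf_eq, Set.mem_Iio, hc_def]
    rw [show -((δ + Gmax) / αd) = (-Gmax - δ) / αd by ring, lt_div_iff₀ hαd0]
    constructor <;> intro h <;> nlinarith
  have hGmeas : Measurable (fun δ => μS (Set.Iio (c δ))) := by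
    have hmono : Monotone (fun x : ℝ => μS (Set.Iio x)) := fun a b hab =>
      measure_mono (Set.Iio_subset_Iio hab)
    exact hmono.measurable.comp hcmeas
  -- main identity
  have hPP : ℙ {ω | Δ ω < -Gmax - αd * S ω} =
      ∫⁻ δ, μS (Set.Iio (c δ)) * ENNReal.ofReal (ρ δ) := by
    have hEp : MeasurableSet {p : ℝ × ℝ | p.1 < -Gmax - αd * p.2} :=
      measurableSet_lt measurable_fst (measurable_const.sub (measurable_snd.const_mul αd))
    have h1 : {ω | Δ ω < -Gmax - αd * S ω} =
        (fun ω => (Δ ω, S ω)) ⁻¹' {p : ℝ × ℝ | p.1 < -Gmax - αd * p.2} := rfl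
    rw [h1, ← Measure.map_apply (hmΔ.prodMk hmS) hEp,
      (indepFun_iff_map_prod_eq_prod_map_map hmΔ.aemeasurable hmS.aemeasurable).mp hindep.symm,
      ← hμΔ_def, ← hμS_def, Measure.prod_apply hEp]
    have h2 : ∀ δ : ℝ, (Prod.mk δ ⁻¹' {p : ℝ × ℝ | p.1 < -Gmax - αd * p.2}) = Set.Iio (c δ) := by
      intro δ
      rw [← hslice δ]
      rfl
    simp only [h2]
    rw [hμΔ_eq, lintegral_withDensity_eq_lintegral_mul volume
      hρc.measurable.ennreal_ofReal hGmeas]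
    refine lintegral_congr fun δ => ?_
    simp [mul_comm]
  set g : ℝ → ℝ := fun δ => (μS (Set.Iio (c δ))).toReal with hg_def
  have hgnn : ∀ δ, 0 ≤ g δ := fun δ => ENNReal.toReal_nonneg
  have hgle1 : ∀ δ, g δ ≤ 1 := fun δ => by
    simpa [hg_def] using ENNReal.toReal_le_of_le_ofReal zero_le_one (by
      simpa using prob_le_one (μ := μS) (s := Set.Iio (c δ)))
  have hgmeas : Measurable g := ENNReal.measurable_toReal.comp hGmeas
  have hgρint : Integrable (fun δ => g δ * ρ δ) := by
    refine hρint.mono' ((hgmeas.mul hρc.measurable).aestronglyMeasurable)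
      (ae_of_all _ fun δ => ?_)
    rw [Real.norm_eq_abs, abs_of_nonneg (mul_nonneg (hgnn δ) (hρnn δ))]
    nlinarith [hgnn δ, hgle1 δ, hρnn δ]
  have hPreal : (ℙ {ω | Δ ω < -Gmax - αd * S ω}).toReal = ∫ δ, g δ * ρ δ := by
    rw [hPP]
    have heq : ∫⁻ δ, μS (Set.Iio (c δ)) * ENNReal.ofReal (ρ δ) =
        ∫⁻ δ, ENNReal.ofReal (g δ * ρ δ) := by
      refine lintegral_congr fun δ => ?_
      rw [ENNReal.ofReal_mul (hgnn δ)]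
      simp only [hg_def, ENNReal.ofReal_toReal (measure_ne_top μS _)]
    rw [heq, ← ofReal_integral_eq_lintegral_ofReal hgρint
      (ae_of_all _ fun δ => mul_nonneg (hgnn δ) (hρnn δ)),
      ENNReal.toReal_ofReal (integral_nonneg fun δ => mul_nonneg (hgnn δ) (hρnn δ))]
  -- continuity of statCDF away from 0 and Smax
  have hcontCDF : ∀ x : ℝ, x ≠ 0 → x ≠ Smax → ContinuousAt (statCDF l αc αd Smax) x := by
    intro x hx0 hxS
    rcases lt_trichotomy x 0 with h | h | h
    · refine Filter.EventuallyEq.continuousAt (y := 0) ?_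
      filter_upwards [Iio_mem_nhds h] with y hy
      simp [statCDF, if_pos (show y < 0 from hy)]
    · exact absurd h hx0
    rcases lt_trichotomy x Smax with h2 | h2 | h2
    · have hF : ContinuousAt (fun y : ℝ =>
          (1 - (1 + αc * αd) / 2 * exp (-((1 / αc - αd) * l * y / 2))) /
            (1 - αc * αd * exp (-((1 / αc - αd) * l * Smax / 2)))) x := by
        apply ContinuousAt.div_const
        exact (continuousAt_const.sub (continuousAt_const.mul
          (Real.continuous_exp.continuousAt.comp
            (by fun_prop))))
      refine hF.congr ?_
      filter_upwards [Ioo_mem_nhds h h2] with y hy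
      simp [statCDF, not_lt.2 hy.1.le, hy.2]
    · exact absurd h2 hxS
    · refine Filter.EventuallyEq.continuousAt (y := 1) ?_
      filter_upwards [Ioi_mem_nhds h2] with y hy
      have h3 : ¬ y < 0 := by
        intro hc
        exact absurd (lt_trans hc (lt_trans hSmax hy)) (lt_irrefl y)
      simp [statCDF, h3, not_lt.2 (le_of_lt (show Smax < y from hy))]
  -- no atoms away from 0 and Smax
  have hnoatom : ∀ x : ℝ, x ≠ 0 → x ≠ Smax → μS (Set.Iio x) = μS (Set.Iic x) := by
    intro x hx0 hxS
    set u : ℕ → ℝ := fun n => x - 1 / (n + 1) with hu_def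
    have hu_mono : Monotone fun n : ℕ => Set.Iic (u n) := by
      intro a b hab
      apply Set.Iic_subset_Iic.2
      have h1 : (1 : ℝ) / (b + 1) ≤ 1 / (a + 1) := by
        apply one_div_le_one_div_of_le (by positivity)
        exact_mod_cast Nat.succ_le_succ hab
      simp only [hu_def]
      linarith
    have hu_tend : Tendsto u atTop (𝓝 x) := by
      have h1 : Tendsto (fun n : ℕ => 1 / ((n : ℝ) + 1)) atTop (𝓝 0) :=
        tendsto_one_div_add_atTop_nhds_zero_nat
      simpa [hu_def] using tendsto_const_nhds.sub h1
    have hUnion : (⋃ n, Set.Iic (u n)) = Set.Iio x := by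
      ext y
      simp only [Set.mem_iUnion, Set.mem_Iic, Set.mem_Iio]
      constructor
      · rintro ⟨n, hn⟩
        have : (0 : ℝ) < 1 / (n + 1) := by positivity
        simp only [hu_def] at hn
        linarith
      · intro hy
        obtain ⟨n, hn⟩ := exists_nat_one_div_lt (sub_pos.2 hy)
        exact ⟨n, by simp only [hu_def]; push_cast at hn ⊢; linarith⟩
    have h1 : Tendsto (fun n => μS (Set.Iic (u n))) atTop (𝓝 (μS (Set.Iio x))) := by
      have := tendsto_measure_iUnion_atTop (μ := μS) hu_mono
      rwa [hUnion] at this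
    have h2 : Tendsto (fun n => μS (Set.Iic (u n))) atTop
        (𝓝 (ENNReal.ofReal (statCDF l αc αd Smax x))) := by
      simp only [hSIic]
      exact (ENNReal.continuous_ofReal.continuousAt.tendsto.comp
        ((hcontCDF x hx0 hxS).tendsto.comp hu_tend))
    rw [tendsto_nhds_unique h1 h2, hSIic x]
  -- a.e. avoidance of the two atoms
  have hae : ∀ᵐ δ : ℝ, δ ≠ -Gmax ∧ δ ≠ -Gmax - αd * Smax := by
    rw [ae_iff]
    refine measure_mono_null (fun δ hδ => ?_)
      (measure_union_null (measure_singleton (-Gmax)) (measure_singleton (-Gmax - αd * Smax)))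
    simp only [Set.mem_setOf_eq, not_and_or, not_not] at hδ
    rcases hδ with h | h
    · exact Set.mem_union_left _ (by simpa using h)
    · exact Set.mem_union_right _ (by simpa using h)
  -- values of g
  have hgval : ∀ δ : ℝ, δ ≠ -Gmax → δ ≠ -Gmax - αd * Smax →
      g δ = statCDF l αc αd Smax (-((δ + Gmax) / αd)) := by
    intro δ h1 h2
    have hc0 : -((δ + Gmax) / αd) ≠ 0 := by
      intro hc
      apply h1
      have : (δ + Gmax) / αd = 0 := by linarith
      have := (div_eq_zero_iff.1 this).resolve_right hαd0.ne'
      linarith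
    have hcS : -((δ + Gmax) / αd) ≠ Smax := by
      intro hc
      apply h2
      field_simp at hc
      linarith
    simp only [hg_def]
    rw [show Set.Iio (c δ) = Set.Iio (-((δ + Gmax) / αd)) from rfl, hnoatom _ hc0 hcS, hSIicR]
  -- first identity
  have hfirst : ∫ δ, g δ * ρ δ =
      ∫ δ in Set.Iic (-Gmax), (l / 2) * exp (l * δ) * statCDF l αc αd Smax (-((δ + Gmax) / αd)) := by
    rw [← integral_add_compl (measurableSet_Iic : MeasurableSet (Set.Iic (-Gmax))) hgρint]
    have hzero : ∫ δ in (Set.Iic (-Gmax))ᶜ, g δ * ρ δ = 0 := by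
      rw [Set.compl_Iic]
      rw [setIntegral_congr_fun measurableSet_Ioi (g := fun _ => (0:ℝ))]
      · simp
      · intro δ hδ
        have hδG : -Gmax < δ := hδ
        have hcneg : -((δ + Gmax) / αd) < 0 := by
          rw [neg_lt, neg_zero]
          exact div_pos (by linarith) hαd0
        have hmeasz : μS (Set.Iio (c δ)) = 0 := by
          refine le_antisymm (le_trans (measure_mono Set.Iio_subset_Iic_self) ?_) zero_le
          rw [hSIic]
          have : statCDF l αc αd Smax (c δ) = 0 := by
            unfold statCDF
            rw [if_pos hcneg]
          rw [this]
          simp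
        simp only [hg_def, hmeasz]
        simp
    rw [hzero, add_zero]
    refine setIntegral_congr_ae measurableSet_Iic ?_
    filter_upwards [hae] with δ hδ hδle
    obtain ⟨h1, h2⟩ := hδ
    have hδ0 : δ < 0 := lt_of_le_of_lt hδle (by linarith)
    have hρval : ρ δ = l / 2 * exp (l * δ) := by
      simp only [hρ_def, abs_of_neg hδ0]
      ring_nf
    rw [hgval δ h1 h2, hρval]
    ring
  -- the calculus evaluation
  have hcalc : (∫ δ in Set.Iic (-Gmax),
        (l / 2) * exp (l * δ) * statCDF l αc αd Smax (-((δ + Gmax) / αd))) =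
      (1 / 2) * exp (-(l * Gmax)) * ((1 - αc * αd) / (1 - αc * αd * E)) := by
    set a0 : ℝ := -Gmax - αd * Smax with ha0_def
    have ha0lt : a0 < -Gmax := by nlinarith
    have hlm : (0:ℝ) < l + m := by positivity
    set C : ℝ := (1 + αc * αd) / 2 * (l / (l + m)) * exp (m * Gmax) with hC_def
    set ψ : ℝ → ℝ := fun δ =>
      l / 2 * exp (l * δ) * ((1 - (1 + αc * αd) / 2 * (exp (m * δ) * exp (m * Gmax))) /
        (1 - αc * αd * E)) with hψ_def
    have hstat1 : ∀ δ ∈ Set.Iic a0,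
        (l / 2) * exp (l * δ) * statCDF l αc αd Smax (-((δ + Gmax) / αd)) =
          l / 2 * exp (l * δ) := by
      intro δ hδ
      have hδa : δ ≤ a0 := hδ
      have hge : Smax ≤ -((δ + Gmax) / αd) := by
        rw [le_neg]
        rw [div_le_iff₀ hαd0]
        nlinarith
      have h1 : ¬ -((δ + Gmax) / αd) < 0 := not_lt.2 (le_trans hSmax.le hge)
      have h2 : ¬ -((δ + Gmax) / αd) < Smax := not_lt.2 hge
      unfold statCDF
      rw [if_neg h1, if_neg h2, mul_one]
    have hstat2 : ∀ δ ∈ Set.Ioc a0 (-Gmax),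
        (l / 2) * exp (l * δ) * statCDF l αc αd Smax (-((δ + Gmax) / αd)) = ψ δ := by
      intro δ hδ
      have h1 : ¬ -((δ + Gmax) / αd) < 0 := by
        rw [not_lt, neg_nonneg]
        apply div_nonpos_of_nonpos_of_nonneg _ hαd0.le
        have := hδ.2
        linarith
      have h2 : -((δ + Gmax) / αd) < Smax := by
        have := hδ.1
        rw [neg_lt, lt_div_iff₀ hαd0]
        simp only [ha0_def] at this
        nlinarith
      have hexp : exp (-((1 / αc - αd) * l * (-((δ + Gmax) / αd)) / 2)) =
          exp (m * δ) * exp (m * Gmax) := by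
        rw [← Real.exp_add]
        congr 1
        rw [hm_def, hk_def]
        field_simp
      unfold statCDF
      rw [if_neg h1, if_pos h2, hexp, hEexp, hψ_def]
    have hcont_exp : ∀ r : ℝ, Continuous fun t : ℝ => exp (r * t) := fun r =>
      Real.continuous_exp.comp (continuous_const.mul continuous_id)
    have hψcont : Continuous ψ := by
      rw [hψ_def]
      exact ((continuous_const.mul (hcont_exp l)).mul
        ((continuous_const.sub (continuous_const.mul ((hcont_exp m).mul
          continuous_const))).div_const _))
    have hint1 : IntegrableOn
        (fun δ => (l / 2) * exp (l * δ) * statCDF l αc αd Smax (-((δ + Gmax) / αd)))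
        (Set.Iic a0) := by
      refine IntegrableOn.congr_fun ((aux_intOn hl a0).const_mul (l / 2)) ?_ measurableSet_Iic
      intro δ hδ
      exact (hstat1 δ hδ).symm
    have hint2 : IntegrableOn
        (fun δ => (l / 2) * exp (l * δ) * statCDF l αc αd Smax (-((δ + Gmax) / αd)))
        (Set.Ioc a0 (-Gmax)) := by
      refine IntegrableOn.congr_fun (hψcont.integrableOn_Ioc) ?_ measurableSet_Ioc
      intro δ hδ
      exact (hstat2 δ hδ).symm
    rw [← Set.Iic_union_Ioc_eq_Iic ha0lt.le,
      setIntegral_union (Set.Iic_disjoint_Ioc le_rfl) measurableSet_Ioc hint1 hint2]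
    have hpart1 : ∫ δ in Set.Iic a0,
        (l / 2) * exp (l * δ) * statCDF l αc αd Smax (-((δ + Gmax) / αd)) =
          exp (l * a0) / 2 := by
      rw [setIntegral_congr_fun measurableSet_Iic hstat1, integral_const_mul, aux_int hl a0]
      field_simp
    have hΦderiv : ∀ y ∈ Set.uIcc a0 (-Gmax),
        HasDerivAt (fun t => (exp (l * t) / 2 - C * (exp (l * t) * exp (m * t)) / 2) /
          (1 - αc * αd * E)) (ψ y) y := by
      intro y _
      have h1 : HasDerivAt (fun t : ℝ => exp (l * t)) (l * exp (l * y)) y := by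
        simpa [mul_comm] using ((hasDerivAt_id y).const_mul l).exp
      have h2 : HasDerivAt (fun t : ℝ => exp (m * t)) (m * exp (m * y)) y := by
        simpa [mul_comm] using ((hasDerivAt_id y).const_mul m).exp
      have h3 := (((h1.div_const 2).sub (((h1.mul h2).const_mul C).div_const 2)).div_const
        (1 - αc * αd * E))
      refine h3.congr_deriv ?_
      rw [hψ_def, hC_def]
      field_simp
    have hpart2 : ∫ δ in Set.Ioc a0 (-Gmax),
        (l / 2) * exp (l * δ) * statCDF l αc αd Smax (-((δ + Gmax) / αd)) =
        (exp (l * (-Gmax)) / 2 - C * (exp (l * (-Gmax)) * exp (m * (-Gmax))) / 2) /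
            (1 - αc * αd * E) -
          (exp (l * a0) / 2 - C * (exp (l * a0) * exp (m * a0)) / 2) / (1 - αc * αd * E) := by
      rw [setIntegral_congr_fun measurableSet_Ioc hstat2,
        ← intervalIntegral.integral_of_le ha0lt.le,
        intervalIntegral.integral_eq_sub_of_hasDerivAt hΦderiv
          (hψcont.intervalIntegrable a0 (-Gmax))]
    rw [hpart1, hpart2]
    -- final algebra
    have hZ : exp (m * Gmax) ≠ 0 := (exp_pos _).ne'
    have hx1 : exp (l * (-Gmax)) = exp (-(l * Gmax)) := by congr 1; ring
    have hx2 : exp (m * (-Gmax)) = 1 / exp (m * Gmax) := by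
      rw [eq_div_iff hZ, ← Real.exp_add]
      simpa using congrArg exp (by ring : m * (-Gmax) + m * Gmax = (0:ℝ))
    have hx3 : exp (m * a0) = E / exp (m * Gmax) := by
      rw [eq_div_iff hZ, ← Real.exp_add, hE_def]
      congr 1
      rw [hm_def, ha0_def]
      field_simp
      ring
    have hx4 : exp (l * a0) = exp (-(l * Gmax)) * exp (-(l * (αd * Smax))) := by
      rw [← Real.exp_add]
      congr 1
      rw [ha0_def]
      ring
    have hsum : l + m = l * (1 + αc * αd) / (2 * (αc * αd)) := by
      rw [hmval]
      field_simp
      ring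
    have hone : (0:ℝ) < 1 + αc * αd := by positivity
    have hllm : l / (l + m) = 2 * (αc * αd) / (1 + αc * αd) := by
      rw [hsum, div_eq_div_iff (by positivity) hone.ne']
      field_simp
    rw [hC_def, hx1, hx2, hx3, hx4, hllm]
    set X := exp (-(l * Gmax)) with hX_def
    set Y2 := exp (-(l * (αd * Smax))) with hY2_def
    set Z := exp (m * Gmax) with hZ_def
    have hZ0 : Z ≠ 0 := (exp_pos _).ne'
    have hDne : (1 - αc * αd * E : ℝ) ≠ 0 := hD0.ne'
    clear_value X Y2 Z
    field_simp
    ring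
  refine ⟨hPreal.trans hfirst, (hPreal.trans hfirst).trans (hcalc.trans ?_)⟩
  rw [hEexp]
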